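/- Let (X, 𝒯, ≤, d) be a weakly stably causal spacetime and ≤↓ the associated order on X × ℝ defined by (x,a) ≤↓ (y,b) iff x ≤ y and b ≤ a + d(x,y). Then (X, 𝒯, ≤) is locally convex (every point has a neighborhood basis of ≤-convex sets) if and only if (X × ℝ, product topology, ≤↓) is locally convex. -/

import Mathlib

open scoped ENNReal

/- Convexity of a set with respect to a relation: S = i(S) ∩ d(S). -/
def OrdConvex {Y : Type*} (r : Y → Y → Prop) (S : Set Y) : Prop :=
  ∀ y, (∃ x ∈ S, r x y) → (∃ z ∈ S, r y z) → y ∈ S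

def LocallyOrdConvex (Y : Type*) [TopologicalSpace Y] (r : Y → Y → Prop) : Prop :=
  ∀ y : Y, ∀ O ∈ nhds y, ∃ C ∈ nhds y, C ⊆ O ∧ OrdConvex r C

/-- The "convex hull" `i(S) ∩ d(S)` of any set is convex for a transitive relation. -/
lemma hull_ordConvex {Y : Type*} (r : Y → Y → Prop)
    (htr : ∀ a b c, r a b → r b c → r a c) (S : Set Y) :
    OrdConvex r {y | (∃ x ∈ S, r x y) ∧ ∃ z ∈ S, r y z} := by
  rintro y ⟨x₀, ⟨⟨x₁, hx₁, hx₁x₀⟩, -⟩, hx₀y⟩ ⟨z₀, ⟨-, ⟨z₁, hz₁, hz₀z₁⟩⟩, hyz₀⟩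
  exact ⟨⟨x₁, hx₁, htr _ _ _ hx₁x₀ hx₀y⟩, ⟨z₁, hz₁, htr _ _ _ hyz₀ hz₀z₁⟩⟩

theorem stmt6 {X : Type*} [TopologicalSpace X] (le : X → X → Prop)
    (hrefl : ∀ x, le x x) (htrans : ∀ x y z, le x y → le y z → le x z)
    (hanti : ∀ x y, le x y → le y x → x = y)
    (hclosed : IsClosed {p : X × X | le p.1 p.2})
    (d : X → X → ℝ≥0∞)
    (husc : UpperSemicontinuous (fun p : X × X => d p.1 p.2))
    (hvanish : ∀ x y, ¬ le x y → d x y = 0)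
    (hrev : ∀ x y z, le x y → le y z → d x y + d y z ≤ d x z)
    (hdiag : ∀ x, d x x = 0)
    (R : X × ℝ → X × ℝ → Prop)
    (hR : ∀ P Q : X × ℝ, R P Q ↔ le P.1 Q.1 ∧ (Q.2 : EReal) ≤ (P.2 : EReal) + (d P.1 Q.1 : EReal)) :
    LocallyOrdConvex X le ↔ LocallyOrdConvex (X × ℝ) R := by
  have hRrefl : ∀ q : X × ℝ, R q q := by
    intro q
    rw [hR]
    refine ⟨hrefl _, ?_⟩
    rw [hdiag, EReal.coe_ennreal_zero, add_zero]
  have hRtrans : ∀ a b c, R a b → R b c → R a c := by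
    intro a b c hab hbc
    rw [hR] at hab hbc ⊢
    refine ⟨htrans _ _ _ hab.1 hbc.1, ?_⟩
    calc (c.2 : EReal) ≤ (b.2 : EReal) + d b.1 c.1 := hbc.2
      _ ≤ ((a.2 : EReal) + d a.1 b.1) + d b.1 c.1 := add_le_add_left hab.2 _
      _ = (a.2 : EReal) + ((d a.1 b.1 + d b.1 c.1 : ℝ≥0∞) : EReal) := by
          rw [EReal.coe_ennreal_add, add_assoc]
      _ ≤ (a.2 : EReal) + d a.1 c.1 := by
          exact add_le_add_right (EReal.coe_ennreal_le_coe_ennreal_iff.2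
            (hrev _ _ _ hab.1 hbc.1)) _
  constructor
  · -- forward
    intro hX P O hO
    obtain ⟨U, hU, I, hI, hUIO⟩ := mem_nhds_prod_iff.mp hO
    obtain ⟨ε, hε, hball⟩ := Metric.mem_nhds_iff.mp hI
    have hW : {p : X × X | d p.1 p.2 < ENNReal.ofReal (ε/2)} ∈ nhds (P.1, P.1) := by
      have h := husc (P.1, P.1) (ENNReal.ofReal (ε/2))
        (by simp [hdiag, ENNReal.ofReal_pos]; linarith)
      exact h
    obtain ⟨V₁, hV₁, V₂, hV₂, hVW⟩ := mem_nhds_prod_iff.mp hW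
    obtain ⟨U', hU', hU'sub, hU'conv⟩ :=
      hX P.1 (U ∩ (V₁ ∩ V₂)) (Filter.inter_mem hU (Filter.inter_mem hV₁ hV₂))
    set S : Set (X × ℝ) := U' ×ˢ Metric.ball P.2 (ε/2) with hS
    have hSsub : S ⊆ {q | (∃ p ∈ S, R p q) ∧ ∃ p' ∈ S, R q p'} := by
      intro q hq
      exact ⟨⟨q, hq, hRrefl q⟩, ⟨q, hq, hRrefl q⟩⟩
    refine ⟨{q | (∃ p ∈ S, R p q) ∧ ∃ p' ∈ S, R q p'}, ?_, ?_, hull_ordConvex R hRtrans S⟩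
    · exact Filter.mem_of_superset
        (prod_mem_nhds hU' (Metric.ball_mem_nhds _ (by linarith))) hSsub
    · rintro ⟨y, b⟩ ⟨⟨⟨x₀, s⟩, hpS, hR1⟩, ⟨⟨z₀, t⟩, hqS, hR2⟩⟩
      rw [hR] at hR1 hR2
      obtain ⟨hx₀U', hsJ⟩ := hpS
      obtain ⟨hz₀U', htJ⟩ := hqS
      have hyU' : y ∈ U' := hU'conv y ⟨x₀, hx₀U', hR1.1⟩ ⟨z₀, hz₀U', hR2.1⟩
      have hyU : y ∈ U := (hU'sub hyU').1
      have hd1 : d x₀ y < ENNReal.ofReal (ε/2) :=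
        hVW (Set.mk_mem_prod (hU'sub hx₀U').2.1 (hU'sub hyU').2.2)
      have hd2 : d y z₀ < ENNReal.ofReal (ε/2) :=
        hVW (Set.mk_mem_prod (hU'sub hyU').2.1 (hU'sub hz₀U').2.2)
      have hr1 : (d x₀ y).toReal < ε/2 := ENNReal.toReal_lt_of_lt_ofReal hd1
      have hr2 : (d y z₀).toReal < ε/2 := ENNReal.toReal_lt_of_lt_ofReal hd2
      have hcoe1 : ((d x₀ y).toReal : EReal) = (d x₀ y : EReal) := by
        rw [← EReal.toReal_coe_ennreal (x := d x₀ y)]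
        exact EReal.coe_toReal (by simp [hd1.ne_top]) (by simp)
      have hcoe2 : ((d y z₀).toReal : EReal) = (d y z₀ : EReal) := by
        rw [← EReal.toReal_coe_ennreal (x := d y z₀)]
        exact EReal.coe_toReal (by simp [hd2.ne_top]) (by simp)
      have hb1 : b ≤ s + (d x₀ y).toReal := by
        have := hR1.2
        rw [← hcoe1, ← EReal.coe_add] at this
        exact_mod_cast this
      have hb2 : t ≤ b + (d y z₀).toReal := by
        have := hR2.2
        rw [← hcoe2, ← EReal.coe_add] at this
        exact_mod_cast this
      have hs : |s - P.2| < ε/2 := by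
        have := hsJ; rw [Metric.mem_ball, Real.dist_eq] at this; exact this
      have ht : |t - P.2| < ε/2 := by
        have := htJ; rw [Metric.mem_ball, Real.dist_eq] at this; exact this
      rw [abs_lt] at hs ht
      have hbI : b ∈ I := by
        apply hball
        rw [Metric.mem_ball, Real.dist_eq, abs_lt]
        have h0 : (0:ℝ) ≤ (d x₀ y).toReal := ENNReal.toReal_nonneg
        have h0' : (0:ℝ) ≤ (d y z₀).toReal := ENNReal.toReal_nonneg
        constructor <;> linarith
      exact hUIO ⟨hyU, hbI⟩
  · -- backward
    intro hP x O hO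
    obtain ⟨C, hCn, hCO, hCc⟩ := hP (x, (0:ℝ)) (O ×ˢ Set.univ)
      (prod_mem_nhds hO Filter.univ_mem)
    refine ⟨{y | (y, (0:ℝ)) ∈ C}, ?_, ?_, ?_⟩
    · exact (Continuous.prodMk continuous_id continuous_const).continuousAt.preimage_mem_nhds hCn
    · intro y hy
      exact (hCO hy).1
    · rintro y ⟨x₀, hx₀, hle⟩ ⟨z₀, hz₀, hle'⟩
      have key : ∀ u v : X, le u v → R (u, (0:ℝ)) (v, (0:ℝ)) := by
        intro u v huv
        rw [hR]
        refine ⟨huv, ?_⟩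
        simp only [EReal.coe_zero, zero_add]
        exact EReal.coe_ennreal_nonneg _
      exact hCc (y, 0) ⟨(x₀, 0), hx₀, key _ _ hle⟩ ⟨(z₀, 0), hz₀, key _ _ hle'⟩
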